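/- Let M ≥ N ≥ r ≥ 1 be integers, let s ≥ 1 be an integer, let a_1 < a_2 < … < a_s be real numbers with a_1 > −1, and let r_1, …, r_s be positive integers with r_1 + ⋯ + r_s = r. Fix r' ∈ {1, …, r} and let s' ∈ {1, …, s} and t' ∈ {1, …, r_{s'}} be determined by r' = r_1 + ⋯ + r_{s'−1} + t'. Let 0 < ρ < min(1, min_{1 ≤ j ≤ s'} 1/(1+a_j)). Then for every integer k with 0 ≤ k ≤ N−r−1, ∫_0^∞ x^k · [ (1/(2πi)) ∮_{|z|=ρ} e^{M x (z−1)} · (z−1)^{N−r} · z^{−(M−r+r')} · (∏_{j=1}^{s'−1} (z − 1/(1+a_j))^{r_j}) · (z − 1/(1+a_{s'}))^{t'−1} dz ] dx = 0. -/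

import Mathlib

open MeasureTheory Set Real Filter

lemma aux_real_int (k : ℕ) {c : ℝ} (hc : 0 < c) :
    IntegrableOn (fun x : ℝ => x ^ k * Real.exp (-(c * x))) (Set.Ioi 0) := by
  have h := integrableOn_rpow_mul_exp_neg_mul_rpow (p := 1) (s := k) (b := c)
    (lt_of_lt_of_le neg_one_lt_zero (Nat.cast_nonneg k)) zero_lt_one hc
  refine h.congr_fun (fun x hx => ?_) measurableSet_Ioi
  simp [Real.rpow_natCast, neg_mul]

lemma aux_cplx_int (k : ℕ) {b : ℂ} (hb : 0 < b.re) :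
    IntegrableOn (fun x : ℝ => (x : ℂ) ^ k * Complex.exp (-(b * x))) (Set.Ioi 0) := by
  have hm : AEStronglyMeasurable (fun x : ℝ => (x : ℂ) ^ k * Complex.exp (-(b * x)))
      (volume.restrict (Set.Ioi 0)) := by
    apply Continuous.aestronglyMeasurable
    continuity
  refine (aux_real_int k hb).mono' hm ?_
  rw [ae_restrict_iff' measurableSet_Ioi]
  filter_upwards with x hx
  rw [mem_Ioi] at hx
  rw [norm_mul, norm_pow, Complex.norm_exp]
  simp only [Complex.norm_real, Real.norm_eq_abs, abs_of_pos hx]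
  have : (-(b * (x:ℂ))).re = -(b.re * x) := by simp [Complex.mul_re]
  rw [this]

lemma aux_exp_tendsto {c : ℝ} (hc : 0 < c) :
    Tendsto (fun x : ℝ => Real.exp (-(c * x))) atTop (nhds 0) := by
  have := Real.tendsto_exp_atBot.comp
    (tendsto_neg_atBot_iff.mpr (Filter.Tendsto.const_mul_atTop hc tendsto_id))
  simpa [Function.comp_def] using this

lemma aux_int_val (k : ℕ) {b : ℂ} (hb : 0 < b.re) :
    ∫ x in Set.Ioi (0:ℝ), (x : ℂ) ^ k * Complex.exp (-(b * x))
      = (k.factorial : ℂ) / b ^ (k + 1) := by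
  have hbne : b ≠ 0 := fun h => by simp [h] at hb
  induction k with
  | zero =>
    have hderiv : ∀ x ∈ Set.Ici (0:ℝ),
        HasDerivAt (fun x : ℝ => -Complex.exp (-(b * x)) / b)
          ((x:ℂ) ^ 0 * Complex.exp (-(b * x))) x := by
      intro x _
      have h1 : HasDerivAt (fun z : ℂ => -Complex.exp (-(b * z)) / b)
          (Complex.exp (-(b * x))) (x : ℂ) := by
        have h0 : HasDerivAt (fun z : ℂ => -(b * z)) (-b) (x:ℂ) := by
          exact (((hasDerivAt_id (x:ℂ)).const_mul b).neg).congr_deriv (by simp)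
        have := (h0.cexp.neg.div_const b)
        refine this.congr_deriv ?_
        rw [mul_neg, neg_neg, mul_div_cancel_right₀ _ hbne]
      simpa using h1.comp_ofReal
    have htend : Tendsto (fun x : ℝ => -Complex.exp (-(b * x)) / b) atTop (nhds 0) := by
      rw [tendsto_zero_iff_norm_tendsto_zero]
      have : (fun x : ℝ => ‖-Complex.exp (-(b * x)) / b‖)
          = fun x : ℝ => Real.exp (-(b.re * x)) / ‖b‖ := by
        funext x
        rw [norm_div, norm_neg, Complex.norm_exp]
        congr 2
        simp [Complex.mul_re]
      rw [this]
      simpa using (aux_exp_tendsto hb).div_const ‖b‖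
    rw [integral_Ioi_of_hasDerivAt_of_tendsto' hderiv (aux_cplx_int 0 hb) htend]
    simp
    field_simp
  | succ k ih =>
    have hderiv : ∀ x ∈ Set.Ici (0:ℝ),
        HasDerivAt (fun x : ℝ => (x:ℂ) ^ (k+1) * Complex.exp (-(b * x)))
          (((k:ℂ)+1) * ((x:ℂ) ^ k * Complex.exp (-(b * x)))
            - b * ((x:ℂ) ^ (k+1) * Complex.exp (-(b * x)))) x := by
      intro x _
      have h1 : HasDerivAt (fun z : ℂ => z ^ (k+1) * Complex.exp (-(b * z)))
          (((k:ℂ)+1) * (x:ℂ) ^ k * Complex.exp (-(b * x))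
            + (x:ℂ) ^ (k+1) * (Complex.exp (-(b * x)) * (-b))) (x:ℂ) := by
        have h0 : HasDerivAt (fun z : ℂ => -(b * z)) (-b) (x:ℂ) := by
          exact (((hasDerivAt_id (x:ℂ)).const_mul b).neg).congr_deriv (by simp)
        have hp : HasDerivAt (fun z : ℂ => z ^ (k+1)) (((k:ℂ)+1) * (x:ℂ) ^ k) (x:ℂ) := by
          simpa using hasDerivAt_pow (k+1) (x:ℂ)
        exact hp.mul h0.cexp
      have := h1.comp_ofReal
      convert this using 1
      ring
    have htend : Tendsto (fun x : ℝ => (x:ℂ) ^ (k+1) * Complex.exp (-(b * x)))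
        atTop (nhds 0) := by
      rw [tendsto_zero_iff_norm_tendsto_zero]
      have heq : ∀ᶠ x : ℝ in atTop, x ^ ((k:ℝ)+1) * Real.exp (-b.re * x)
          = ‖(x:ℂ) ^ (k+1) * Complex.exp (-(b * x))‖ := by
        filter_upwards [eventually_gt_atTop (0:ℝ)] with x hx
        rw [norm_mul, norm_pow, Complex.norm_exp]
        have : (-(b * (x:ℂ))).re = -b.re * x := by simp [Complex.mul_re]
        rw [this]
        rw [Complex.norm_real, Real.norm_eq_abs, abs_of_pos hx, ← Real.rpow_natCast x (k+1)]
        push_cast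
        ring
      exact Tendsto.congr' heq
        (tendsto_rpow_mul_exp_neg_mul_atTop_nhds_zero ((k:ℝ)+1) b.re hb)
    have hint : IntegrableOn (fun x : ℝ =>
        ((k:ℂ)+1) * ((x:ℂ) ^ k * Complex.exp (-(b * x)))
          - b * ((x:ℂ) ^ (k+1) * Complex.exp (-(b * x)))) (Set.Ioi 0) := by
      exact ((aux_cplx_int k hb).const_mul _).sub ((aux_cplx_int (k+1) hb).const_mul _)
    have h0 := integral_Ioi_of_hasDerivAt_of_tendsto' hderiv hint htend
    rw [MeasureTheory.integral_sub ((aux_cplx_int k hb).const_mul _)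
      ((aux_cplx_int (k+1) hb).const_mul _), MeasureTheory.integral_const_mul,
      MeasureTheory.integral_const_mul, ih] at h0
    simp only [Complex.ofReal_zero, ne_eq, Complex.exp_zero, mul_one, zero_pow, zero_mul,
      sub_zero, mul_zero] at h0
    have h2 : b * ∫ x in Set.Ioi (0:ℝ), (x:ℂ) ^ (k+1) * Complex.exp (-(b * x))
        = ((k:ℂ)+1) * ((k.factorial : ℂ) / b ^ (k+1)) := by
      have h0' : ((k:ℂ)+1) * ((k.factorial : ℂ) / b ^ (k+1))
          - b * ∫ x in Set.Ioi (0:ℝ), (x:ℂ) ^ (k+1) * Complex.exp (-(b * x))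
          = 0 - (0:ℂ) ^ (k+1) * Complex.exp (-0) := h0
      simp only [zero_pow (Nat.succ_ne_zero k), zero_mul, sub_zero] at h0'
      linear_combination -h0'
    have h3 : ∫ x in Set.Ioi (0:ℝ), (x:ℂ) ^ (k+1) * Complex.exp (-(b * x))
        = ((k:ℂ)+1) * ((k.factorial : ℂ) / b ^ (k+1)) / b := by
      rw [eq_div_iff hbne]
      linear_combination h2
    rw [h3, Nat.factorial_succ]
    push_cast
    rw [← mul_div_assoc, div_div, ← pow_succ]

lemma aux_circle_zero (p : Polynomial ℂ) (m : ℕ) (hm : p.natDegree + 2 ≤ m) {ρ : ℝ}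
    (hρ : 0 < ρ) : (∮ z in C(0, ρ), p.eval z / z ^ m) = 0 := by
  have key : ∀ z : ℂ, z ∈ Metric.sphere (0:ℂ) ρ →
      p.eval z / z ^ m = ∑ i ∈ Finset.range (m-1), p.coeff i * (z - 0) ^ ((i:ℤ) - m) := by
    intro z hz
    have hz0 : z ≠ 0 := by
      intro h
      rw [h] at hz
      simp only [Metric.mem_sphere, dist_self] at hz
      exact hρ.ne hz
    rw [Polynomial.eval_eq_sum_range' (by omega : p.natDegree < m - 1) z, Finset.sum_div]
    refine Finset.sum_congr rfl fun i _ => ?_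
    rw [sub_zero, mul_div_assoc]
    congr 1
    rw [← zpow_natCast z i, ← zpow_natCast z m, ← zpow_sub₀ hz0]
  rw [circleIntegral.integral_congr hρ.le key]
  have hswap : (∮ z in C(0, ρ), ∑ i ∈ Finset.range (m-1), p.coeff i * (z - 0) ^ ((i:ℤ) - m))
      = ∑ i ∈ Finset.range (m-1), ∮ z in C(0, ρ), p.coeff i * (z - 0) ^ ((i:ℤ) - m) := by
    simp only [circleIntegral, smul_eq_mul, Finset.mul_sum]
    rw [intervalIntegral.integral_finset_sum]
    intro i _
    apply Continuous.intervalIntegrable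
    simp only [deriv_circleMap]
    exact ((continuous_circleMap 0 ρ).mul continuous_const).mul (continuous_const.mul
      (((continuous_circleMap 0 ρ).sub continuous_const).zpow₀ _
        (fun θ => Or.inl (by simp [hρ.ne']))))
  rw [hswap]
  refine Finset.sum_eq_zero fun i hi => ?_
  rw [circleIntegral.integral_const_mul,
    circleIntegral.integral_sub_zpow_of_ne (by rw [Finset.mem_range] at hi; omega) 0 0 ρ,
    mul_zero]

/-- Orthogonality of the multiple Laguerre polynomials of type II (given by a contour
integral over a small circle around the origin) to low-degree monomials, with respect to
the weight `x^(M-N) e^(-Mx)` on `(0, ∞)` (here absorbed into the integrand). -/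
theorem stmt_6 (M N r s : ℕ) (hr : 1 ≤ r) (hrN : r ≤ N) (hNM : N ≤ M) (hs : 1 ≤ s)
    (a : Fin s → ℝ) (ha : StrictMono a) (ha1 : -1 < a ⟨0, hs⟩)
    (rm : Fin s → ℕ) (hrm : ∀ j, 1 ≤ rm j) (hsum : ∑ j, rm j = r)
    (r' : ℕ) (hr'1 : 1 ≤ r') (hr'r : r' ≤ r)
    (s' : Fin s) (t' : ℕ) (ht'1 : 1 ≤ t') (ht' : t' ≤ rm s')
    (hdecomp : r' = (∑ j ∈ Finset.Iio s', rm j) + t')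
    (ρ : ℝ) (hρ0 : 0 < ρ) (hρ1 : ρ < 1)
    (hρa : ∀ j : Fin s, j ≤ s' → ρ < 1 / (1 + a j))
    (k : ℕ) (hk : k + r + 1 ≤ N) :
    ∫ x in Set.Ioi (0 : ℝ), (x : ℂ) ^ k *
      ((2 * (Real.pi : ℂ) * Complex.I)⁻¹ *
        ∮ z in C(0, ρ),
          Complex.exp ((M : ℂ) * (x : ℂ) * (z - 1)) * (z - 1) ^ (N - r) / z ^ (M - r + r') *
            (∏ j ∈ Finset.Iio s', (z - 1 / (1 + (a j : ℂ))) ^ rm j) *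
            (z - 1 / (1 + (a s' : ℂ))) ^ (t' - 1)) = 0 := by
  have hM1 : 1 ≤ M := le_trans (le_trans hr hrN) hNM
  set m := M - r + r' with hm_def
  set n := N - r with hn_def
  have hkn : k + 1 ≤ n := by omega
  set cc : Fin s → ℂ := fun j => 1 / (1 + (a j : ℂ)) with hcc
  set H : ℂ → ℂ := fun z => (z - 1) ^ n / z ^ m *
      (∏ j ∈ Finset.Iio s', (z - cc j) ^ rm j) * (z - cc s') ^ (t' - 1) with hH
  set μ := volume.restrict (Set.Ioi (0:ℝ)) with hμ
  set ν := volume.restrict (Set.Ioc (0:ℝ) (2*Real.pi)) with hν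
  set G : ℝ → ℝ → ℂ := fun x θ => (circleMap 0 ρ θ * Complex.I) *
      ((x:ℂ)^k * (Complex.exp ((M:ℂ)*x*(circleMap 0 ρ θ - 1)) * H (circleMap 0 ρ θ)))
    with hG
  have hcmne : ∀ θ : ℝ, circleMap 0 ρ θ ≠ 0 := by
    intro θ h
    have := norm_circleMap_zero ρ θ
    rw [h] at this
    simp [abs_of_pos hρ0] at this
    exact hρ0.ne' this.symm
  have hsne : ∀ z : ℂ, z ∈ Metric.sphere (0:ℂ) ρ → z ≠ 0 := by
    intro z hz h
    rw [h] at hz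
    simp only [Metric.mem_sphere, dist_self] at hz
    exact hρ0.ne hz
  have hre : ∀ θ : ℝ, (circleMap 0 ρ θ).re ≤ ρ := by
    intro θ
    have h1 := Complex.re_le_norm (circleMap 0 ρ θ)
    rwa [norm_circleMap_zero, abs_of_pos hρ0] at h1
  have hbre : ∀ θ : ℝ, 0 < ((M:ℂ)*(1 - circleMap 0 ρ θ)).re := by
    intro θ
    have h1 : ((M:ℂ)*(1 - circleMap 0 ρ θ)).re = (M:ℝ)*(1 - (circleMap 0 ρ θ).re) := by
      simp [Complex.mul_re]
    rw [h1]
    have := hre θ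
    apply mul_pos (by exact_mod_cast hM1) (by linarith)
  -- continuity of H
  have hprodcont : Continuous fun z : ℂ =>
      (∏ j ∈ Finset.Iio s', (z - cc j) ^ rm j) * (z - cc s') ^ (t' - 1) := by
    apply Continuous.mul
    · exact continuous_finset_prod _ fun j _ => ((continuous_id.sub continuous_const).pow _)
    · exact (continuous_id.sub continuous_const).pow _
  have hHcontOn : ContinuousOn H (Metric.sphere (0:ℂ) ρ) := by
    rw [hH]
    simp only [mul_assoc]
    apply ContinuousOn.mul
    · exact ContinuousOn.div ((continuous_id.sub continuous_const).pow _).continuousOn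
        (continuous_pow m).continuousOn
        (fun z hz => pow_ne_zero _ (hsne z hz))
    · exact hprodcont.continuousOn
  -- bound for H on the sphere
  obtain ⟨C, hC⟩ := (isCompact_sphere (0:ℂ) ρ).exists_bound_of_continuousOn hHcontOn
  -- continuity of G
  have hGcont : Continuous (Function.uncurry G) := by
    rw [hG]
    apply Continuous.mul
    · exact ((continuous_circleMap 0 ρ).comp continuous_snd).mul continuous_const
    apply Continuous.mul
    · exact (Complex.continuous_ofReal.comp continuous_fst).pow k
    apply Continuous.mul
    · apply Complex.continuous_exp.comp
      exact (continuous_const.mul (Complex.continuous_ofReal.comp continuous_fst)).mul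
        (((continuous_circleMap 0 ρ).comp continuous_snd).sub continuous_const)
    · rw [hH]
      simp only [mul_assoc]
      apply Continuous.mul
      · exact Continuous.div
          ((((continuous_circleMap 0 ρ).comp continuous_snd).sub continuous_const).pow _)
          (((continuous_circleMap 0 ρ).comp continuous_snd).pow m)
          (fun q => pow_ne_zero _ (hcmne q.2))
      · exact hprodcont.comp ((continuous_circleMap 0 ρ).comp continuous_snd)
  -- integrability on the product
  have hGint : Integrable (Function.uncurry G) (μ.prod ν) := by
    have hf : Integrable (fun x : ℝ => (ρ * C) * (x ^ k * Real.exp (-((M:ℝ)*(1-ρ)) * x))) μ := by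
      apply Integrable.const_mul
      have := aux_real_int k (c := (M:ℝ)*(1-ρ))
        (mul_pos (by exact_mod_cast hM1) (by linarith))
      refine this.congr_fun ?_ measurableSet_Ioi
      intro x _
      simp only [neg_mul, mul_assoc]
    have hg : Integrable (fun _ : ℝ => (1:ℝ)) ν := by
      rw [hν, MeasureTheory.integrable_const_iff]
      right
      refine ⟨lt_of_le_of_lt (measure_mono (Set.subset_univ _)) ?_⟩
      simp [Real.volume_Ioc, ENNReal.mul_lt_top]
    have hdom := hf.mul_prod hg
    refine hdom.mono' hGcont.aestronglyMeasurable ?_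
    rw [hμ, hν, MeasureTheory.Measure.prod_restrict,
      MeasureTheory.ae_restrict_iff' (measurableSet_Ioi.prod measurableSet_Ioc)]
    filter_upwards with q hq
    obtain ⟨hq1, hq2⟩ := hq
    rw [Set.mem_Ioi] at hq1
    have h2 : ((M:ℂ)*(q.1:ℂ)*(circleMap 0 ρ q.2 - 1)).re
        = (M:ℝ)*q.1*((circleMap 0 ρ q.2).re - 1) := by
      simp [Complex.mul_re]
    have hnorm : ‖Function.uncurry G q‖
        = ρ * (q.1 ^ k * (Real.exp ((M:ℝ)*q.1*((circleMap 0 ρ q.2).re - 1))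
            * ‖H (circleMap 0 ρ q.2)‖)) := by
      simp only [Function.uncurry, hG]
      rw [norm_mul, norm_mul, norm_mul, norm_pow, norm_mul, Complex.norm_exp,
        norm_circleMap_zero,
        abs_of_pos hρ0, Complex.norm_I, mul_one,
        Complex.norm_real, Real.norm_eq_abs, abs_of_pos hq1, h2]
    rw [hnorm]
    have hmem : circleMap 0 ρ q.2 ∈ Metric.sphere (0:ℂ) ρ :=
      circleMap_mem_sphere 0 hρ0.le q.2
    have hHb : ‖H (circleMap 0 ρ q.2)‖ ≤ C := hC _ hmem
    have hexp : Real.exp ((M:ℝ)*q.1*((circleMap 0 ρ q.2).re - 1))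
        ≤ Real.exp (-((M:ℝ)*(1-ρ)) * q.1) := by
      apply Real.exp_le_exp.mpr
      have h3 : (circleMap 0 ρ q.2).re ≤ ρ := hre q.2
      have h4 : (1:ℝ) ≤ (M:ℝ) := by exact_mod_cast hM1
      have h5 : (M:ℝ)*q.1*((circleMap 0 ρ q.2).re - 1) ≤ (M:ℝ)*q.1*(ρ-1) := by
        apply mul_le_mul_of_nonneg_left (by linarith)
        positivity
      linarith
    have hH0 : (0:ℝ) ≤ ‖H (circleMap 0 ρ q.2)‖ := norm_nonneg _
    have hC0 : (0:ℝ) ≤ C := le_trans hH0 hHb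
    calc ρ * (q.1 ^ k * (Real.exp ((M:ℝ)*q.1*((circleMap 0 ρ q.2).re - 1))
            * ‖H (circleMap 0 ρ q.2)‖))
        ≤ ρ * (q.1 ^ k * (Real.exp (-((M:ℝ)*(1-ρ)) * q.1) * C)) := by
          apply mul_le_mul_of_nonneg_left _ hρ0.le
          apply mul_le_mul_of_nonneg_left _ (by positivity)
          exact mul_le_mul hexp hHb hH0 (Real.exp_pos _).le
      _ = (ρ * C) * (q.1 ^ k * Real.exp (-((M:ℝ)*(1-ρ)) * q.1)) * 1 := by ring
  -- inner integral evaluation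
  have hinner : ∀ θ : ℝ, (∫ x, G x θ ∂μ) = (circleMap 0 ρ θ * Complex.I) *
      (H (circleMap 0 ρ θ) * ((k.factorial:ℂ)/((M:ℂ)*(1 - circleMap 0 ρ θ))^(k+1))) := by
    intro θ
    have h1 : ∀ x : ℝ, G x θ = ((circleMap 0 ρ θ * Complex.I) * H (circleMap 0 ρ θ)) *
        ((x:ℂ)^k * Complex.exp (-(((M:ℂ)*(1 - circleMap 0 ρ θ)) * (x:ℂ)))) := by
      intro x
      simp only [hG]
      rw [show (M:ℂ)*(x:ℂ)*(circleMap 0 ρ θ - 1)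
        = -(((M:ℂ)*(1 - circleMap 0 ρ θ)) * (x:ℂ)) by ring]
      ring
    simp only [h1]
    rw [MeasureTheory.integral_const_mul, hμ, aux_int_val k (hbre θ)]
    ring
  -- rewrite the integrand of the outer integral
  have hx1 : ∀ x : ℝ, (x:ℂ)^k * ((2*(Real.pi:ℂ)*Complex.I)⁻¹ *
        ∮ z in C(0, ρ),
          Complex.exp ((M : ℂ) * (x : ℂ) * (z - 1)) * (z - 1) ^ n / z ^ m *
            (∏ j ∈ Finset.Iio s', (z - 1 / (1 + (a j : ℂ))) ^ rm j) *
            (z - 1 / (1 + (a s' : ℂ))) ^ (t' - 1))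
      = (2*(Real.pi:ℂ)*Complex.I)⁻¹ * ∫ θ, G x θ ∂ν := by
    intro x
    rw [mul_left_comm]
    congr 1
    rw [← circleIntegral.integral_const_mul]
    have heq : (∮ z in C(0, ρ), (x:ℂ)^k *
          (Complex.exp ((M : ℂ) * (x : ℂ) * (z - 1)) * (z - 1) ^ n / z ^ m *
            (∏ j ∈ Finset.Iio s', (z - 1 / (1 + (a j : ℂ))) ^ rm j) *
            (z - 1 / (1 + (a s' : ℂ))) ^ (t' - 1)))
        = ∮ z in C(0, ρ), (x:ℂ)^k * (Complex.exp ((M:ℂ)*(x:ℂ)*(z-1)) * H z) := by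
      refine circleIntegral.integral_congr hρ0.le fun z _ => ?_
      simp only [hH, hcc]
      ring
    rw [heq, circleIntegral]
    simp only [deriv_circleMap, smul_eq_mul]
    rw [intervalIntegral.integral_of_le Real.two_pi_pos.le, hν]
  simp only [hx1]
  rw [MeasureTheory.integral_const_mul, MeasureTheory.integral_integral_swap hGint]
  simp only [hinner]
  have hcirc : (∫ θ, (circleMap 0 ρ θ * Complex.I) *
        (H (circleMap 0 ρ θ) * ((k.factorial:ℂ)/((M:ℂ)*(1 - circleMap 0 ρ θ))^(k+1))) ∂ν)
      = ∮ z in C(0, ρ), H z * ((k.factorial:ℂ)/((M:ℂ)*(1-z))^(k+1)) := by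
    rw [circleIntegral]
    simp only [deriv_circleMap, smul_eq_mul]
    rw [intervalIntegral.integral_of_le Real.two_pi_pos.le, hν]
  rw [hcirc]
  -- the polynomial
  set p : Polynomial ℂ := (Polynomial.X - Polynomial.C 1)^(n-(k+1)) *
      ((∏ j ∈ Finset.Iio s', (Polynomial.X - Polynomial.C (cc j))^(rm j)) *
        (Polynomial.X - Polynomial.C (cc s'))^(t'-1)) with hp
  have hdeg : p.natDegree + 2 ≤ m := by
    have hb1 : ((Polynomial.X : Polynomial ℂ) - Polynomial.C 1).natDegree = 1 :=
      Polynomial.natDegree_X_sub_C 1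
    have h1 : p.natDegree ≤ (n-(k+1)) + ((∑ j ∈ Finset.Iio s', rm j) + (t'-1)) := by
      refine le_trans Polynomial.natDegree_mul_le ?_
      gcongr ?_ + ?_
      · exact le_trans Polynomial.natDegree_pow_le
          (by rw [Polynomial.natDegree_X_sub_C, mul_one])
      · refine le_trans Polynomial.natDegree_mul_le ?_
        gcongr ?_ + ?_
        · refine le_trans (Polynomial.natDegree_prod_le _ _) ?_
          refine Finset.sum_le_sum fun j _ => ?_
          exact le_trans Polynomial.natDegree_pow_le
            (by rw [Polynomial.natDegree_X_sub_C, mul_one])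
        · exact le_trans Polynomial.natDegree_pow_le
            (by rw [Polynomial.natDegree_X_sub_C, mul_one])
    omega
  have hpt : Set.EqOn (fun z => H z * ((k.factorial:ℂ)/((M:ℂ)*(1-z))^(k+1)))
      (fun z => ((-1:ℂ)^(k+1) * (k.factorial:ℂ) / (M:ℂ)^(k+1)) * (p.eval z / z^m))
      (Metric.sphere (0:ℂ) ρ) := by
    intro z hz
    have hz0 : z ≠ 0 := hsne z hz
    have h1z : (1:ℂ) - z ≠ 0 := by
      intro h
      have hz1 : z = 1 := by linear_combination -h
      rw [Metric.mem_sphere, hz1] at hz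
      simp [Complex.dist_eq] at hz
      linarith
    have hMne : (M:ℂ) ≠ 0 := Nat.cast_ne_zero.mpr (by omega)
    simp only [hH, hp, Polynomial.eval_mul, Polynomial.eval_pow, Polynomial.eval_sub,
      Polynomial.eval_X, Polynomial.eval_C, Polynomial.eval_one, Polynomial.eval_prod]
    have hsplit : (z-1)^n = (z-1)^(n-(k+1)) * (z-1)^(k+1) := by
      rw [← pow_add]
      congr 1
      omega
    have hneg : (z-1)^(k+1) = (-1:ℂ)^(k+1) * (1-z)^(k+1) := by
      rw [← mul_pow]
      congr 1
      ring
    rw [hsplit, hneg, mul_pow ((M:ℂ)) (1-z)]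
    field_simp
  rw [circleIntegral.integral_congr hρ0.le hpt, circleIntegral.integral_const_mul,
    aux_circle_zero p m hdeg hρ0, mul_zero, mul_zero]
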